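/- arXiv:0904.4817 — 2 statements merged into one kernel-verified Lean document; each statement's English description precedes it below -/
import Mathlib

section
/- For every κ > 0, δ > 0 and integer n ≥ 0, the double integral of the Brownian sine covariance over one sampling bin satisfies ∫_{nδ}^{(n+1)δ} ∫_{nδ}^{(n+1)δ} (1/2) ( e^{−κ |s₁ − s₂|} − e^{−κ (s₁ + s₂ + 2 min(s₁,s₂))} ) ds₁ ds₂ = δ/κ + (1/(2κ²)) ( −(1/6) e^{−4κ(n+1)δ} − (1/2) e^{−4κ n δ} + (2/3) e^{−κ(4n+1)δ} + 2 e^{−κδ} − 2 ). -/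
open MeasureTheory Real

private lemma integral_exp_linear (c d a b : ℝ) (hc : c ≠ 0) :
    ∫ x in a..b, Real.exp (c * x + d) = (Real.exp (c * b + d) - Real.exp (c * a + d)) / c := by
  have h : ∀ x ∈ Set.uIcc a b,
      HasDerivAt (fun x => Real.exp (c * x + d) / c) (Real.exp (c * x + d)) x := by
    intro x _
    have h1 : HasDerivAt (fun x => c * x + d) c x :=
      by simpa using ((hasDerivAt_id x).const_mul c).add_const d
    have h3 := h1.exp.div_const c
    simpa [mul_div_cancel_right₀ _ hc] using h3
  rw [intervalIntegral.integral_eq_sub_of_hasDerivAt h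
    ((Real.continuous_exp.comp (by continuity)).intervalIntegrable a b)]
  ring

private lemma inner_integral (κ a b s₁ : ℝ) (hκ : 0 < κ) (h1 : a ≤ s₁) (h2 : s₁ ≤ b) :
    (∫ s₂ in a..b, (1 / 2) * (Real.exp (-κ * |s₁ - s₂|)
        - Real.exp (-κ * (s₁ + s₂ + 2 * min s₁ s₂)))) =
    1/κ - (1/(2*κ)) * Real.exp (-κ * s₁ + κ * a)
        - (1/(6*κ)) * Real.exp (-κ * s₁ + -(3*κ) * a)
        - (1/(2*κ)) * Real.exp (κ * s₁ + -κ * b)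
        - (1/(3*κ)) * Real.exp (-(4*κ) * s₁ + 0)
        + (1/(2*κ)) * Real.exp (-(3*κ) * s₁ + -κ * b) := by
  have hκ' : κ ≠ 0 := ne_of_gt hκ
  have hcont : Continuous fun s₂ => (1 / 2) * (Real.exp (-κ * |s₁ - s₂|)
      - Real.exp (-κ * (s₁ + s₂ + 2 * min s₁ s₂))) := by
    apply Continuous.mul continuous_const
    apply Continuous.sub
    · exact Real.continuous_exp.comp (by fun_prop)
    · exact Real.continuous_exp.comp (by fun_prop)
  rw [← intervalIntegral.integral_add_adjacent_intervals
      (hcont.intervalIntegrable a s₁) (hcont.intervalIntegrable s₁ b)]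
  have e1 : (∫ s₂ in a..s₁, (1 / 2) * (Real.exp (-κ * |s₁ - s₂|)
      - Real.exp (-κ * (s₁ + s₂ + 2 * min s₁ s₂)))) =
      ∫ s₂ in a..s₁, (1/2) * (Real.exp (κ * s₂ + -κ * s₁) - Real.exp (-(3*κ) * s₂ + -κ * s₁)) := by
    apply intervalIntegral.integral_congr
    intro s₂ hs
    rw [Set.uIcc_of_le h1] at hs
    have hmin : min s₁ s₂ = s₂ := min_eq_right hs.2
    have habs : |s₁ - s₂| = s₁ - s₂ := abs_of_nonneg (by linarith [hs.2])
    simp only [habs, hmin]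
    ring_nf
  have e2 : (∫ s₂ in s₁..b, (1 / 2) * (Real.exp (-κ * |s₁ - s₂|)
      - Real.exp (-κ * (s₁ + s₂ + 2 * min s₁ s₂)))) =
      ∫ s₂ in s₁..b, (1/2) * (Real.exp (-κ * s₂ + κ * s₁) - Real.exp (-κ * s₂ + -(3*κ) * s₁)) := by
    apply intervalIntegral.integral_congr
    intro s₂ hs
    rw [Set.uIcc_of_le h2] at hs
    have hmin : min s₁ s₂ = s₁ := min_eq_left hs.1
    have habs : |s₁ - s₂| = s₂ - s₁ := by
      rw [abs_sub_comm]; exact abs_of_nonneg (by linarith [hs.1])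
    simp only [habs, hmin]
    ring_nf
  rw [e1, e2]
  rw [intervalIntegral.integral_const_mul, intervalIntegral.integral_const_mul,
    intervalIntegral.integral_sub
      ((by fun_prop : Continuous fun x : ℝ => Real.exp (κ * x + -κ * s₁)).intervalIntegrable a s₁)
      ((by fun_prop : Continuous fun x : ℝ => Real.exp (-(3*κ) * x + -κ * s₁)).intervalIntegrable a s₁),
    intervalIntegral.integral_sub
      ((by fun_prop : Continuous fun x : ℝ => Real.exp (-κ * x + κ * s₁)).intervalIntegrable s₁ b)
      ((by fun_prop : Continuous fun x : ℝ => Real.exp (-κ * x + -(3*κ) * s₁)).intervalIntegrable s₁ b),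
    integral_exp_linear κ (-κ * s₁) a s₁ hκ',
    integral_exp_linear (-(3*κ)) (-κ * s₁) a s₁ (by simpa using hκ'),
    integral_exp_linear (-κ) (κ * s₁) s₁ b (by simpa using hκ'),
    integral_exp_linear (-κ) (-(3*κ) * s₁) s₁ b (by simpa using hκ')]
  rw [show κ * s₁ + -κ * s₁ = 0 by ring, show -κ * s₁ + κ * s₁ = 0 by ring,
      show -(3*κ) * s₁ + -κ * s₁ = -(4*κ) * s₁ + 0 by ring,
      show -κ * s₁ + -(3*κ) * s₁ = -(4*κ) * s₁ + 0 by ring,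
      show -κ * b + κ * s₁ = κ * s₁ + -κ * b by ring,
      show -κ * b + -(3*κ) * s₁ = -(3*κ) * s₁ + -κ * b by ring,
      show -(3*κ) * a + -κ * s₁ = -κ * s₁ + -(3*κ) * a by ring,
      show κ * a + -κ * s₁ = -κ * s₁ + κ * a by ring]
  field_simp
  ring_nf
  field_simp [mul_inv_cancel₀ hκ', pow_succ]
  rw [Real.exp_zero]
  ring

private lemma outer_integral (κ a b : ℝ) (hκ' : κ ≠ 0) :
    (∫ s₁ in a..b, (1/κ - (1/(2*κ)) * Real.exp (-κ * s₁ + κ * a)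
       - (1/(6*κ)) * Real.exp (-κ * s₁ + -(3*κ) * a)
       - (1/(2*κ)) * Real.exp (κ * s₁ + -κ * b)
       - (1/(3*κ)) * Real.exp (-(4*κ) * s₁ + 0)
       + (1/(2*κ)) * Real.exp (-(3*κ) * s₁ + -κ * b))) =
    (b-a) * (1/κ)
     - (1/(2*κ)) * ((Real.exp (-κ*b + κ*a) - Real.exp (-κ*a + κ*a)) / (-κ))
     - (1/(6*κ)) * ((Real.exp (-κ*b + -(3*κ)*a) - Real.exp (-κ*a + -(3*κ)*a)) / (-κ))
     - (1/(2*κ)) * ((Real.exp (κ*b + -κ*b) - Real.exp (κ*a + -κ*b)) / κ)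
     - (1/(3*κ)) * ((Real.exp (-(4*κ)*b + 0) - Real.exp (-(4*κ)*a + 0)) / (-(4*κ)))
     + (1/(2*κ)) * ((Real.exp (-(3*κ)*b + -κ*b) - Real.exp (-(3*κ)*a + -κ*b)) / (-(3*κ))) := by
  have c1 : Continuous fun s₁ : ℝ => Real.exp (-κ * s₁ + κ * a) := by fun_prop
  have c2 : Continuous fun s₁ : ℝ => Real.exp (-κ * s₁ + -(3*κ) * a) := by fun_prop
  have c3 : Continuous fun s₁ : ℝ => Real.exp (κ * s₁ + -κ * b) := by fun_prop
  have c4 : Continuous fun s₁ : ℝ => Real.exp (-(4*κ) * s₁ + 0) := by fun_prop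
  have c5 : Continuous fun s₁ : ℝ => Real.exp (-(3*κ) * s₁ + -κ * b) := by fun_prop
  rw [intervalIntegral.integral_add (by
        apply IntervalIntegrable.sub
        apply IntervalIntegrable.sub
        apply IntervalIntegrable.sub
        apply IntervalIntegrable.sub
        · exact intervalIntegrable_const
        · exact (c1.const_mul _).intervalIntegrable a b
        · exact (c2.const_mul _).intervalIntegrable a b
        · exact (c3.const_mul _).intervalIntegrable a b
        · exact (c4.const_mul _).intervalIntegrable a b)
      ((c5.const_mul _).intervalIntegrable a b),
    intervalIntegral.integral_sub (by
        apply IntervalIntegrable.sub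
        apply IntervalIntegrable.sub
        apply IntervalIntegrable.sub
        · exact intervalIntegrable_const
        · exact (c1.const_mul _).intervalIntegrable a b
        · exact (c2.const_mul _).intervalIntegrable a b
        · exact (c3.const_mul _).intervalIntegrable a b)
      ((c4.const_mul _).intervalIntegrable a b),
    intervalIntegral.integral_sub (by
        apply IntervalIntegrable.sub
        apply IntervalIntegrable.sub
        · exact intervalIntegrable_const
        · exact (c1.const_mul _).intervalIntegrable a b
        · exact (c2.const_mul _).intervalIntegrable a b)
      ((c3.const_mul _).intervalIntegrable a b),
    intervalIntegral.integral_sub (by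
        apply IntervalIntegrable.sub
        · exact intervalIntegrable_const
        · exact (c1.const_mul _).intervalIntegrable a b)
      ((c2.const_mul _).intervalIntegrable a b),
    intervalIntegral.integral_sub intervalIntegrable_const
      ((c1.const_mul _).intervalIntegrable a b),
    intervalIntegral.integral_const,
    intervalIntegral.integral_const_mul, intervalIntegral.integral_const_mul,
    intervalIntegral.integral_const_mul, intervalIntegral.integral_const_mul,
    intervalIntegral.integral_const_mul,
    integral_exp_linear (-κ) (κ * a) a b (by simpa using hκ'),
    integral_exp_linear (-κ) (-(3*κ) * a) a b (by simpa using hκ'),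
    integral_exp_linear κ (-κ * b) a b hκ',
    integral_exp_linear (-(4*κ)) 0 a b (by simpa using hκ'),
    integral_exp_linear (-(3*κ)) (-κ * b) a b (by simpa using hκ')]
  simp [smul_eq_mul]

/-- the double integral of the Brownian sine covariance over one sampling bin. -/
theorem bin_double_integral
    (κ δ : ℝ) (hκ : 0 < κ) (hδ : 0 < δ) (n : ℕ) :
    (∫ s₁ in (n * δ)..((n + 1) * δ), ∫ s₂ in (n * δ)..((n + 1) * δ),
        (1 / 2) * (Real.exp (-κ * |s₁ - s₂|)
          - Real.exp (-κ * (s₁ + s₂ + 2 * min s₁ s₂)))) =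
      δ / κ + (1 / (2 * κ ^ 2)) *
        (-(1 / 6) * Real.exp (-4 * κ * (n + 1) * δ)
          - (1 / 2) * Real.exp (-4 * κ * n * δ)
          + (2 / 3) * Real.exp (-κ * (4 * n + 1) * δ)
          + 2 * Real.exp (-κ * δ) - 2) := by
  have hκ' : κ ≠ 0 := ne_of_gt hκ
  have hab : (n : ℝ) * δ ≤ ((n : ℝ) + 1) * δ := by
    apply mul_le_mul_of_nonneg_right (by linarith) hδ.le
  have hEq : Set.EqOn
      (fun s₁ => ∫ s₂ in ((n : ℝ) * δ)..(((n : ℝ) + 1) * δ),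
        (1 / 2) * (Real.exp (-κ * |s₁ - s₂|)
          - Real.exp (-κ * (s₁ + s₂ + 2 * min s₁ s₂))))
      (fun s₁ => 1/κ - (1/(2*κ)) * Real.exp (-κ * s₁ + κ * ((n : ℝ) * δ))
        - (1/(6*κ)) * Real.exp (-κ * s₁ + -(3*κ) * ((n : ℝ) * δ))
        - (1/(2*κ)) * Real.exp (κ * s₁ + -κ * (((n : ℝ) + 1) * δ))
        - (1/(3*κ)) * Real.exp (-(4*κ) * s₁ + 0)
        + (1/(2*κ)) * Real.exp (-(3*κ) * s₁ + -κ * (((n : ℝ) + 1) * δ)))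
      (Set.uIcc ((n : ℝ) * δ) (((n : ℝ) + 1) * δ)) := by
    intro s₁ hs
    rw [Set.uIcc_of_le hab] at hs
    exact inner_integral κ _ _ s₁ hκ hs.1 hs.2
  rw [intervalIntegral.integral_congr hEq, outer_integral κ _ _ hκ']
  rw [show -κ * (((n : ℝ) + 1) * δ) + κ * ((n : ℝ) * δ) = -κ * δ by ring,
      show -κ * ((n : ℝ) * δ) + κ * ((n : ℝ) * δ) = 0 by ring,
      show -κ * (((n : ℝ) + 1) * δ) + -(3*κ) * ((n : ℝ) * δ) = -κ * (4 * (n : ℝ) + 1) * δ by ring,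
      show -κ * ((n : ℝ) * δ) + -(3*κ) * ((n : ℝ) * δ) = -4 * κ * (n : ℝ) * δ by ring,
      show κ * (((n : ℝ) + 1) * δ) + -κ * (((n : ℝ) + 1) * δ) = 0 by ring,
      show κ * ((n : ℝ) * δ) + -κ * (((n : ℝ) + 1) * δ) = -κ * δ by ring,
      show -(4*κ) * (((n : ℝ) + 1) * δ) + 0 = -4 * κ * ((n : ℝ) + 1) * δ by ring,
      show -(4*κ) * ((n : ℝ) * δ) + 0 = -4 * κ * (n : ℝ) * δ by ring,
      show -(3*κ) * (((n : ℝ) + 1) * δ) + -κ * (((n : ℝ) + 1) * δ) = -4 * κ * ((n : ℝ) + 1) * δ by ring,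
      show -(3*κ) * ((n : ℝ) * δ) + -κ * (((n : ℝ) + 1) * δ) = -κ * (4 * (n : ℝ) + 1) * δ by ring,
      Real.exp_zero,
      show (((n : ℝ) + 1) * δ - (n : ℝ) * δ) = δ by ring]
  field_simp
  ring
end

section
/- Fix κ > 0, T > 0 and θ > 0. For each integer N ≥ 1 let ε₀^{(N)}, …, ε_N^{(N)} be i.i.d. standard Gaussian random variables independent of (W₁, W₂), and set Y_n^{(N)} = y(n T / N) + θ ε_n^{(N)}. Then the expectation of the quadratic-variation estimator applied to the noisy observations diverges in the fine-sampling limit: E[ (1/(2 N (T/N))) Σ_{n=0}^{N−1} (Y_{n+1}^{(N)} − Y_n^{(N)})² ] = E[K_{N,T/N}] + θ² N / T, and this quantity tends to +∞ as N → ∞. -/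
open MeasureTheory ProbabilityTheory Real Filter

/-- `W` is a standard one-dimensional Brownian motion on the probability space `(Ω, P)`:
an (a.s.) continuous process with `W 0 = 0`, independent increments, and Gaussian
increments `W t - W s ~ N(0, t - s)` for `0 ≤ s ≤ t`. -/
structure IsStdBM {Ω : Type} [MeasurableSpace Ω] (P : Measure Ω) (W : ℝ → Ω → ℝ) : Prop where
  meas : ∀ t : ℝ, Measurable (W t)
  cont : ∀ᵐ ω ∂P, Continuous fun t => W t ω
  init : ∀ᵐ ω ∂P, W 0 ω = 0
  indepIncr : ∀ (n : ℕ) (t : Fin (n + 1) → ℝ), Monotone t →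
    iIndepFun
      (fun i : Fin n => fun ω => W (t i.succ) ω - W (t i.castSucc) ω) P
  gaussIncr : ∀ s t : ℝ, 0 ≤ s → s ≤ t →
    P.map (fun ω => W t ω - W s ω) = gaussianReal 0 (Real.toNNReal (t - s))

/-- The σ-algebras generated by the two processes `W₁` and `W₂` are independent. -/
def ProcIndep {Ω : Type} [MeasurableSpace Ω] (P : Measure Ω) (W₁ W₂ : ℝ → Ω → ℝ) : Prop :=
  Indep (⨆ t : ℝ, MeasurableSpace.comap (W₁ t) inferInstance)
        (⨆ t : ℝ, MeasurableSpace.comap (W₂ t) inferInstance) P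

/-- The Lagrangian displacement along the shear direction of the flow `v(x₁,x₂) = (0, sin x₁)`
started at the origin: `y(t) = ∫₀ᵗ sin(√(2κ) W₁(s)) ds + √(2κ) W₂(t)`. -/
noncomputable def disp {Ω : Type} (κ : ℝ) (W₁ W₂ : ℝ → Ω → ℝ) (t : ℝ) (ω : Ω) : ℝ :=
  (∫ s in (0:ℝ)..t, Real.sin (Real.sqrt (2 * κ) * W₁ s ω)) + Real.sqrt (2 * κ) * W₂ t ω

/-- The quadratic-variation estimator
`K_{N,δ} = (1/(2Nδ)) Σ_{n=0}^{N−1} (y((n+1)δ) − y(nδ))²`. -/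
noncomputable def qv {Ω : Type} (κ : ℝ) (W₁ W₂ : ℝ → Ω → ℝ) (N : ℕ) (δ : ℝ) (ω : Ω) : ℝ :=
  (1 / (2 * N * δ)) * ∑ n ∈ Finset.range N,
    (disp κ W₁ W₂ ((n + 1) * δ) ω - disp κ W₁ W₂ (n * δ) ω) ^ 2

/-- The expectation of the quadratic-variation estimator applied to the noisy observations
`Y_n^{(N)} = y(n T/N) + θ ε_n^{(N)}` at sampling interval `δ = T/N`. -/
noncomputable def noisyQVMean {Ω : Type} [MeasurableSpace Ω] (P : Measure Ω)
    (W₁ W₂ : ℝ → Ω → ℝ) (κ T θ : ℝ) (ε : (N : ℕ) → Fin (N + 1) → Ω → ℝ) (N : ℕ) : ℝ :=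
  ∫ ω, (1 / (2 * N * (T / N))) * ∑ n : Fin N,
      ((disp κ W₁ W₂ ((n.succ : ℕ) * (T / N)) ω + θ * ε N n.succ ω)
        - (disp κ W₁ W₂ ((n.castSucc : ℕ) * (T / N)) ω + θ * ε N n.castSucc ω)) ^ 2 ∂P

open scoped NNReal ENNReal Topology

section GaussAux

lemma aux_deriv1 (x : ℝ) : HasDerivAt (fun y : ℝ => -rexp (-y^2/2)) (x * rexp (-x^2/2)) x := by
  have h : HasDerivAt (fun y : ℝ => -y^2/2) (-x) x := by
    have := ((hasDerivAt_pow 2 x).neg.div_const 2)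
    exact this.congr_deriv (by norm_num; ring)
  have := (h.exp).neg
  exact this.congr_deriv (by ring)

lemma aux_deriv2 (x : ℝ) : HasDerivAt (fun y : ℝ => -(y * rexp (-y^2/2)))
    (x^2 * rexp (-x^2/2) - rexp (-x^2/2)) x := by
  have h : HasDerivAt (fun y : ℝ => -y^2/2) (-x) x := by
    have := ((hasDerivAt_pow 2 x).neg.div_const 2)
    exact this.congr_deriv (by norm_num; ring)
  have := ((hasDerivAt_id x).mul h.exp).neg
  simp only [id_eq] at this
  exact this.congr_deriv (by ring)

lemma aux_int_mul : Integrable (fun x : ℝ => x * rexp (-x^2/2)) := by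
  have := integrable_mul_exp_neg_mul_sq (b := 1/2) (by norm_num)
  convert this using 2 with x
  ring_nf

lemma aux_int_exp : Integrable (fun x : ℝ => rexp (-x^2/2)) := by
  have := integrable_exp_neg_mul_sq (b := 1/2) (by norm_num)
  convert this using 2 with x
  ring_nf

lemma aux_int_sq : Integrable (fun x : ℝ => x^2 * rexp (-x^2/2)) := by
  have := integrable_rpow_mul_exp_neg_mul_sq (b := 1/2) (s := 2) (by norm_num) (by norm_num)
  convert this using 2 with x
  rw [show ((2:ℝ) = ((2:ℕ):ℝ)) by norm_num, Real.rpow_natCast]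
  ring_nf

lemma aux_first_moment : ∫ x : ℝ, x * rexp (-x^2/2) = 0 :=
  integral_eq_zero_of_hasDerivAt_of_integrable aux_deriv1 aux_int_mul (aux_int_exp.neg)

lemma aux_second_moment : ∫ x : ℝ, x^2 * rexp (-x^2/2) = Real.sqrt (2*π) := by
  have h0 : ∫ x : ℝ, (x^2 * rexp (-x^2/2) - rexp (-x^2/2)) = 0 :=
    integral_eq_zero_of_hasDerivAt_of_integrable aux_deriv2 (aux_int_sq.sub aux_int_exp)
      (aux_int_mul.neg)
  rw [integral_sub aux_int_sq aux_int_exp, sub_eq_zero] at h0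
  rw [h0]
  have := integral_gaussian (1/2 : ℝ)
  have h2 : ∫ x : ℝ, rexp (-x^2/2) = Real.sqrt (π / (1/2)) := by
    rw [← this]
    congr 1 with x
    ring_nf
  rw [h2]
  norm_num
  ring_nf

lemma aux_integral_gauss (μ : ℝ) {v : ℝ≥0} (hv : v ≠ 0) (g : ℝ → ℝ) :
    ∫ x, g x ∂(gaussianReal μ v) = ∫ x, gaussianPDFReal μ v x * g x := by
  rw [gaussianReal_of_var_ne_zero _ hv,
    show gaussianPDF μ v = (fun x => ((gaussianPDFReal μ v x).toNNReal : ℝ≥0∞)) from rfl,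
    integral_withDensity_eq_integral_smul ((measurable_gaussianPDFReal μ v).real_toNNReal) g]
  congr 1 with x
  simp [NNReal.smul_def, Real.coe_toNNReal _ (gaussianPDFReal_nonneg μ v x)]

lemma aux_integrable_gauss_iff (μ : ℝ) {v : ℝ≥0} (hv : v ≠ 0) (g : ℝ → ℝ) :
    Integrable g (gaussianReal μ v) ↔
      Integrable (fun x => gaussianPDFReal μ v x * g x) := by
  rw [gaussianReal_of_var_ne_zero _ hv,
    show gaussianPDF μ v = (fun x => ((gaussianPDFReal μ v x).toNNReal : ℝ≥0∞)) from rfl,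
    integrable_withDensity_iff_integrable_smul ((measurable_gaussianPDFReal μ v).real_toNNReal)]
  constructor <;> intro h <;> refine h.congr (Filter.Eventually.of_forall fun x => ?_) <;>
    simp [NNReal.smul_def, Real.coe_toNNReal _ (gaussianPDFReal_nonneg μ v x)]

lemma aux_pdf0v {v : ℝ≥0} (hv : v ≠ 0) (x : ℝ) :
    gaussianPDFReal 0 v x = (Real.sqrt (2*π*v))⁻¹ * rexp (-(2*(v:ℝ))⁻¹ * x^2) := by
  have : ((v:ℝ)) ≠ 0 := by exact_mod_cast hv
  simp only [gaussianPDFReal, sub_zero]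
  congr 1
  ring

lemma aux_integrable_id_gauss {v : ℝ≥0} (hv : v ≠ 0) :
    Integrable (fun x => x) (gaussianReal 0 v) := by
  have hvpos : (0:ℝ) < (v:ℝ) := lt_of_le_of_ne (v.coe_nonneg) (by exact_mod_cast (Ne.symm hv))
  rw [aux_integrable_gauss_iff 0 hv]
  have : Integrable (fun x : ℝ => (Real.sqrt (2*π*v))⁻¹ * (x * rexp (-(2*(v:ℝ))⁻¹ * x^2))) :=
    (integrable_mul_exp_neg_mul_sq (by positivity)).const_mul _
  refine this.congr (Filter.Eventually.of_forall fun x => ?_)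
  simp only [aux_pdf0v hv]
  ring

lemma aux_integrable_sq_gauss {v : ℝ≥0} (hv : v ≠ 0) :
    Integrable (fun x => x^2) (gaussianReal 0 v) := by
  have hvpos : (0:ℝ) < (v:ℝ) := lt_of_le_of_ne (v.coe_nonneg) (by exact_mod_cast (Ne.symm hv))
  rw [aux_integrable_gauss_iff 0 hv]
  have h2 := integrable_rpow_mul_exp_neg_mul_sq (b := (2*(v:ℝ))⁻¹) (s := 2)
    (by positivity) (by norm_num)
  have : Integrable (fun x : ℝ => (Real.sqrt (2*π*v))⁻¹ * (x^2 * rexp (-(2*(v:ℝ))⁻¹ * x^2))) := by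
    refine (Integrable.const_mul ?_ _)
    refine h2.congr (Filter.Eventually.of_forall fun x => ?_)
    simp [Real.rpow_natCast]
  refine this.congr (Filter.Eventually.of_forall fun x => ?_)
  simp only [aux_pdf0v hv]
  ring

lemma aux_sqrt_ne : Real.sqrt (2*π) ≠ 0 := by
  positivity

lemma aux_pdf01 (x : ℝ) : gaussianPDFReal 0 1 x = (Real.sqrt (2*π))⁻¹ * rexp (-x^2/2) := by
  simp only [gaussianPDFReal, sub_zero, NNReal.coe_one, mul_one]

lemma aux_integral_id_gauss01 : ∫ x, x ∂(gaussianReal 0 1) = 0 := by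
  rw [aux_integral_gauss 0 one_ne_zero]
  have : (fun x : ℝ => gaussianPDFReal 0 1 x * x)
      = fun x : ℝ => (Real.sqrt (2*π))⁻¹ * (x * rexp (-x^2/2)) := by
    funext x; rw [aux_pdf01]; ring
  rw [this, integral_const_mul, aux_first_moment, mul_zero]

lemma aux_integral_sq_gauss01 : ∫ x, x^2 ∂(gaussianReal 0 1) = 1 := by
  rw [aux_integral_gauss 0 one_ne_zero]
  have : (fun x : ℝ => gaussianPDFReal 0 1 x * x^2)
      = fun x : ℝ => (Real.sqrt (2*π))⁻¹ * (x^2 * rexp (-x^2/2)) := by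
    funext x; rw [aux_pdf01]; ring
  rw [this, integral_const_mul, aux_second_moment, inv_mul_cancel₀ aux_sqrt_ne]

end GaussAux

section ProcAux

noncomputable def tgrid (k : ℕ) (s : ℝ) : ℝ := (⌊s * (k+1)⌋ : ℤ) / (k+1)

noncomputable def gsin {Ω : Type} (c : ℝ) (W : ℝ → Ω → ℝ) (s : ℝ) (ω : Ω) : ℝ :=
  (Filter.limsup (fun k : ℕ =>
    ENNReal.ofReal (Real.sin (c * W (tgrid k s) ω) + 1)) atTop).toReal - 1

noncomputable def Ig {Ω : Type} (c : ℝ) (W : ℝ → Ω → ℝ) (t : ℝ) (ω : Ω) : ℝ :=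
  ∫ s in Set.Ioc (0:ℝ) t, gsin c W s ω

lemma tendsto_tgrid (s : ℝ) : Tendsto (fun k : ℕ => tgrid k s) atTop (𝓝 s) := by
  have h : Tendsto (fun k : ℕ => tgrid k s - s) atTop (𝓝 0) := by
    apply squeeze_zero_norm (a := fun k : ℕ => 1 / ((k:ℝ)+1))
    · intro k
      have hk : (0:ℝ) < (k:ℝ)+1 := by positivity
      have : tgrid k s - s = ((⌊s * ((k:ℝ)+1)⌋ : ℝ) - s * ((k:ℝ)+1))/((k:ℝ)+1) := by
        rw [tgrid]
        field_simp
      rw [this, norm_div, Real.norm_of_nonneg hk.le, div_le_div_iff_of_pos_right hk,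
        Real.norm_eq_abs]
      rw [abs_le]
      constructor
      · nlinarith [Int.lt_floor_add_one (s * ((k:ℝ)+1))]
      · nlinarith [Int.floor_le (s * ((k:ℝ)+1))]
    · exact tendsto_one_div_add_atTop_nhds_zero_nat
  have := h.add_const s
  simpa using this

lemma gsin_eq_of_continuous {Ω : Type} (c : ℝ) (W : ℝ → Ω → ℝ) (ω : Ω)
    (hω : Continuous fun t => W t ω) (s : ℝ) : gsin c W s ω = Real.sin (c * W s ω) := by
  have h1 : Tendsto (fun k : ℕ => ENNReal.ofReal (Real.sin (c * W (tgrid k s) ω) + 1)) atTop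
      (𝓝 (ENNReal.ofReal (Real.sin (c * W s ω) + 1))) := by
    apply (ENNReal.continuous_ofReal.tendsto _).comp
    have h2 : Tendsto (fun k : ℕ => W (tgrid k s) ω) atTop (𝓝 (W s ω)) :=
      (hω.tendsto s).comp (tendsto_tgrid s)
    exact (((Real.continuous_sin.tendsto _).comp (h2.const_mul c)).add_const 1)
  rw [gsin, h1.limsup_eq, ENNReal.toReal_ofReal (by nlinarith [Real.neg_one_le_sin (c * W s ω)])]
  ring

lemma abs_gsin_le {Ω : Type} (c : ℝ) (W : ℝ → Ω → ℝ) (s : ℝ) (ω : Ω) :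
    |gsin c W s ω| ≤ 1 := by
  have hub : Filter.limsup (fun k : ℕ =>
      ENNReal.ofReal (Real.sin (c * W (tgrid k s) ω) + 1)) atTop ≤ 2 := by
    refine Filter.limsup_le_of_le (by isBoundedDefault) ?_
    exact Filter.Eventually.of_forall fun k => by
        calc ENNReal.ofReal (Real.sin (c * W (tgrid k s) ω) + 1)
            ≤ ENNReal.ofReal 2 := ENNReal.ofReal_le_ofReal
              (by nlinarith [Real.sin_le_one (c * W (tgrid k s) ω)])
          _ ≤ 2 := by simp
  have h2 : (Filter.limsup (fun k : ℕ =>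
      ENNReal.ofReal (Real.sin (c * W (tgrid k s) ω) + 1)) atTop).toReal ≤ 2 := by
    calc _ ≤ (2 : ℝ≥0∞).toReal := ENNReal.toReal_mono (by simp) hub
      _ = 2 := by simp
  have h3 : (0:ℝ) ≤ (Filter.limsup (fun k : ℕ =>
      ENNReal.ofReal (Real.sin (c * W (tgrid k s) ω) + 1)) atTop).toReal := ENNReal.toReal_nonneg
  rw [gsin, abs_le]
  constructor <;> linarith

lemma measurable_gsin {Ω : Type} [MeasurableSpace Ω] (c : ℝ) {W : ℝ → Ω → ℝ}
    (hW : ∀ t, Measurable (W t)) :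
    Measurable (fun p : ℝ × Ω => gsin c W p.1 p.2) := by
  have h1 : ∀ k : ℕ, Measurable (fun p : ℝ × Ω => W (tgrid k p.1) p.2) := by
    intro k
    have hz : Measurable (fun q : Ω × ℤ => W ((q.2 : ℝ)/(k+1)) q.1) :=
      measurable_from_prod_countable_left (fun z => by simpa using hW (((z:ℤ):ℝ)/(k+1)))
    have hfloor : Measurable (fun s : ℝ => ⌊s * (k+1)⌋) :=
      (measurable_id.mul_const _).floor
    exact hz.comp ((measurable_snd).prodMk (hfloor.comp measurable_fst))
  have h2 : ∀ k : ℕ, Measurable (fun p : ℝ × Ω =>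
      ENNReal.ofReal (Real.sin (c * W (tgrid k p.1) p.2) + 1)) := fun k =>
    ENNReal.measurable_ofReal.comp
      ((Real.measurable_sin.comp ((h1 k).const_mul c)).add_const 1)
  have h3 : Measurable (fun p : ℝ × Ω => Filter.limsup (fun k : ℕ =>
      ENNReal.ofReal (Real.sin (c * W (tgrid k p.1) p.2) + 1)) atTop) :=
    Measurable.limsup h2
  exact (ENNReal.measurable_toReal.comp h3).sub_const 1

lemma measurable_Ig {Ω : Type} [MeasurableSpace Ω] (c t : ℝ) {W : ℝ → Ω → ℝ}
    (hW : ∀ s, Measurable (W s)) : Measurable (Ig c W t) := by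
  have hsm : StronglyMeasurable (fun q : Ω × ℝ => gsin c W q.2 q.1) :=
    ((measurable_gsin c hW).comp measurable_swap).stronglyMeasurable
  exact (hsm.integral_prod_right' (ν := volume.restrict (Set.Ioc (0:ℝ) t))).measurable

lemma abs_Ig_le {Ω : Type} [MeasurableSpace Ω] (c : ℝ) {W : ℝ → Ω → ℝ}
    (hW : ∀ s, Measurable (W s)) {t : ℝ} (ht : 0 ≤ t)
    (ω : Ω) : |Ig c W t ω| ≤ t := by
  have hmeas : AEStronglyMeasurable (fun s => gsin c W s ω)
      (volume.restrict (Set.Ioc (0:ℝ) t)) :=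
    (((measurable_gsin c hW).comp (measurable_id.prodMk measurable_const))).aestronglyMeasurable
  have h := norm_setIntegral_le_of_norm_le_const (μ := volume) (s := Set.Ioc (0:ℝ) t)
    (C := 1) (f := fun s => gsin c W s ω) (by simp [Real.volume_Ioc])
    (fun x _ => by rw [Real.norm_eq_abs]; exact abs_gsin_le c W x ω)
  rw [measureReal_def, Real.volume_Ioc] at h
  calc |Ig c W t ω| ≤ 1 * (ENNReal.ofReal (t - 0)).toReal := h
    _ = t - 0 := by rw [one_mul, ENNReal.toReal_ofReal (by linarith)]
    _ ≤ t := by linarith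

lemma Ig_eq_of_continuous {Ω : Type} (κ : ℝ) (W₁ W₂ : ℝ → Ω → ℝ) (ω : Ω)
    (hω : Continuous fun t => W₁ t ω) {t : ℝ} (ht : 0 ≤ t) :
    disp κ W₁ W₂ t ω = Ig (Real.sqrt (2*κ)) W₁ t ω + Real.sqrt (2*κ) * W₂ t ω := by
  rw [disp, Ig]
  congr 1
  rw [intervalIntegral.integral_of_le ht]
  exact integral_congr_ae (Filter.Eventually.of_forall fun s =>
    (gsin_eq_of_continuous _ W₁ ω hω s).symm)

noncomputable def sigW {Ω : Type} (W : ℝ → Ω → ℝ) : MeasurableSpace Ω :=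
  ⨆ t : ℝ, MeasurableSpace.comap (W t) inferInstance

lemma measurable_sigW {Ω : Type} (W : ℝ → Ω → ℝ) (t : ℝ) : Measurable[sigW W] (W t) :=
  measurable_iff_comap_le.mpr
    (le_iSup (fun t => MeasurableSpace.comap (W t) inferInstance) t)

lemma sigW_le {Ω : Type} [m : MeasurableSpace Ω] {W : ℝ → Ω → ℝ}
    (hW : ∀ t, Measurable (W t)) : sigW W ≤ m :=
  iSup_le fun t => measurable_iff_comap_le.mp (hW t)

lemma aux_indep_mono {Ω : Type} {mΩ : MeasurableSpace Ω} {P : Measure Ω}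
    {m₁ m₂ m₁' m₂' : MeasurableSpace Ω} (h : Indep m₁ m₂ P)
    (h1 : m₁' ≤ m₁) (h2 : m₂' ≤ m₂) : Indep m₁' m₂' P := by
  rw [Indep_iff] at h ⊢
  exact fun t1 t2 ht1 ht2 => h t1 t2 (h1 _ ht1) (h2 _ ht2)

end ProcAux


/-- with observation noise the expectation of the quadratic-variation
estimator equals `E[K_{N,T/N}] + θ² N / T`, and it diverges in the fine-sampling limit. -/
theorem noisy_qv_diverges
    {Ω : Type} [MeasurableSpace Ω] (P : Measure Ω) [IsProbabilityMeasure P]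
    (W₁ W₂ : ℝ → Ω → ℝ) (hW₁ : IsStdBM P W₁) (hW₂ : IsStdBM P W₂)
    (hInd : ProcIndep P W₁ W₂)
    (κ T θ : ℝ) (hκ : 0 < κ) (hT : 0 < T) (hθ : 0 < θ)
    (ε : (N : ℕ) → Fin (N + 1) → Ω → ℝ)
    (hεmeas : ∀ N i, Measurable (ε N i))
    (hεlaw : ∀ N i, P.map (ε N i) = gaussianReal 0 1)
    (hεiid : ∀ N, iIndepFun (ε N) P)
    (hεW : ∀ N, Indep (⨆ i, MeasurableSpace.comap (ε N i) inferInstance)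
        ((⨆ t : ℝ, MeasurableSpace.comap (W₁ t) inferInstance)
          ⊔ (⨆ t : ℝ, MeasurableSpace.comap (W₂ t) inferInstance)) P) :
    (∀ N : ℕ, 1 ≤ N →
      noisyQVMean P W₁ W₂ κ T θ ε N =
        (∫ ω, qv κ W₁ W₂ N (T / N) ω ∂P) + θ ^ 2 * N / T) ∧
    Tendsto (noisyQVMean P W₁ W₂ κ T θ ε) atTop atTop := by
  
  classical
  have hc2κ : (0:ℝ) < 2*κ := by linarith
  set c : ℝ := Real.sqrt (2 * κ) with hc
  have hm₁le : sigW W₁ ≤ ‹MeasurableSpace Ω› := sigW_le hW₁.meas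
  have hm₂le : sigW W₂ ≤ ‹MeasurableSpace Ω› := sigW_le hW₂.meas
  have hW₁m : ∀ t, Measurable[sigW W₁] (W₁ t) := measurable_sigW W₁
  have hW₂m : ∀ t, Measurable[sigW W₂] (W₂ t) := measurable_sigW W₂
  -- ε moments
  have hεL1 : ∀ (M : ℕ) (i : Fin (M+1)), Integrable (ε M i) P := by
    intro M i
    have h1 : Integrable (fun x : ℝ => x) (P.map (ε M i)) := by
      rw [hεlaw M i]; exact aux_integrable_id_gauss one_ne_zero
    have h2 := (integrable_map_measure measurable_id.aestronglyMeasurable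
      (hεmeas M i).aemeasurable).mp h1
    simpa [Function.comp] using h2
  have hεsqint : ∀ (M : ℕ) (i : Fin (M+1)), Integrable (fun ω => ε M i ω ^ 2) P := by
    intro M i
    have h1 : Integrable (fun x : ℝ => x ^ 2) (P.map (ε M i)) := by
      rw [hεlaw M i]; exact aux_integrable_sq_gauss one_ne_zero
    have h2 := (integrable_map_measure (measurable_id.pow_const 2).aestronglyMeasurable
      (hεmeas M i).aemeasurable).mp h1
    simpa [Function.comp_def] using h2
  have hεmean : ∀ (M : ℕ) (i : Fin (M+1)), ∫ ω, ε M i ω ∂P = 0 := by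
    intro M i
    have h := integral_map (μ := P) (φ := ε M i) (hεmeas M i).aemeasurable
      (f := fun x : ℝ => x) measurable_id.aestronglyMeasurable
    rw [hεlaw M i, aux_integral_id_gauss01] at h
    exact h.symm
  have hεsq : ∀ (M : ℕ) (i : Fin (M+1)), ∫ ω, ε M i ω ^ 2 ∂P = 1 := by
    intro M i
    have h := integral_map (μ := P) (φ := ε M i) (hεmeas M i).aemeasurable
      (f := fun x : ℝ => x ^ 2) (measurable_id.pow_const 2).aestronglyMeasurable
    rw [hεlaw M i, aux_integral_sq_gauss01] at h
    exact h.symm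
  have hεL2 : ∀ (M : ℕ) (i : Fin (M+1)), MemLp (ε M i) 2 P := fun M i =>
    (memLp_two_iff_integrable_sq (hεmeas M i).aestronglyMeasurable).mpr (hεsqint M i)
  -- the key identity
  have key : ∀ N : ℕ, 1 ≤ N →
      noisyQVMean P W₁ W₂ κ T θ ε N =
        (∫ ω, qv κ W₁ W₂ N (T / N) ω ∂P) + θ ^ 2 * N / T := by
    intro N hN
    have hNpos : (0:ℝ) < N := by exact_mod_cast hN
    have hδ : (0:ℝ) < T / N := by positivity
    set X : ℕ → Ω → ℝ := fun n ω =>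
      (Ig c W₁ (((n:ℝ)+1)*(T/N)) ω - Ig c W₁ ((n:ℝ)*(T/N)) ω)
        + c * (W₂ (((n:ℝ)+1)*(T/N)) ω - W₂ ((n:ℝ)*(T/N)) ω) with hX
    set B : Fin N → Ω → ℝ := fun n ω => ε N n.succ ω - ε N n.castSucc ω with hB
    have htnn : ∀ n : ℕ, (0:ℝ) ≤ (n:ℝ)*(T/N) := fun n =>
      mul_nonneg (Nat.cast_nonneg n) hδ.le
    have htnn1 : ∀ n : ℕ, (0:ℝ) ≤ ((n:ℝ)+1)*(T/N) := fun n =>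
      mul_nonneg (by positivity) hδ.le
    have hle : ∀ n : ℕ, (n:ℝ)*(T/N) ≤ ((n:ℝ)+1)*(T/N) := fun n => by nlinarith
    -- measurability of X
    have hXm : ∀ n : ℕ, Measurable[sigW W₁ ⊔ sigW W₂] (X n) := by
      intro n
      have h1 : Measurable[sigW W₁ ⊔ sigW W₂] (Ig c W₁ (((n:ℝ)+1)*(T/N))) :=
        (@measurable_Ig Ω (sigW W₁) c _ W₁ hW₁m).mono le_sup_left le_rfl
      have h2 : Measurable[sigW W₁ ⊔ sigW W₂] (Ig c W₁ ((n:ℝ)*(T/N))) :=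
        (@measurable_Ig Ω (sigW W₁) c _ W₁ hW₁m).mono le_sup_left le_rfl
      have h3 : Measurable[sigW W₁ ⊔ sigW W₂] (W₂ (((n:ℝ)+1)*(T/N))) :=
        (hW₂m _).mono le_sup_right le_rfl
      have h4 : Measurable[sigW W₁ ⊔ sigW W₂] (W₂ ((n:ℝ)*(T/N))) :=
        (hW₂m _).mono le_sup_right le_rfl
      exact ((h1.sub h2).add ((h3.sub h4).const_mul c))
    have hXmeas : ∀ n, Measurable (X n) := fun n =>
      (hXm n).mono (sup_le hm₁le hm₂le) le_rfl
    -- L² bounds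
    have hA_L2 : ∀ n : ℕ, MemLp (fun ω =>
        Ig c W₁ (((n:ℝ)+1)*(T/N)) ω - Ig c W₁ ((n:ℝ)*(T/N)) ω) 2 P := by
      intro n
      refine MemLp.of_bound
        (((measurable_Ig c _ hW₁.meas).sub (measurable_Ig c _ hW₁.meas)).aestronglyMeasurable)
        (((n:ℝ)+1)*(T/N) + (n:ℝ)*(T/N)) (Filter.Eventually.of_forall fun ω => ?_)
      rw [Real.norm_eq_abs]
      calc |Ig c W₁ (((n:ℝ)+1)*(T/N)) ω - Ig c W₁ ((n:ℝ)*(T/N)) ω|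
          ≤ |Ig c W₁ (((n:ℝ)+1)*(T/N)) ω| + |Ig c W₁ ((n:ℝ)*(T/N)) ω| := abs_sub _ _
        _ ≤ ((n:ℝ)+1)*(T/N) + (n:ℝ)*(T/N) :=
            add_le_add (abs_Ig_le c hW₁.meas (htnn1 n) ω) (abs_Ig_le c hW₁.meas (htnn n) ω)
    have hG_L2 : ∀ n : ℕ, MemLp (fun ω =>
        W₂ (((n:ℝ)+1)*(T/N)) ω - W₂ ((n:ℝ)*(T/N)) ω) 2 P := by
      intro n
      have hlaw := hW₂.gaussIncr ((n:ℝ)*(T/N)) (((n:ℝ)+1)*(T/N)) (htnn n) (hle n)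
      have hvne : (Real.toNNReal (((n:ℝ)+1)*(T/N) - (n:ℝ)*(T/N))) ≠ 0 := by
        simp only [Ne, Real.toNNReal_eq_zero, not_le]
        nlinarith
      have hmg : Measurable (fun ω => W₂ (((n:ℝ)+1)*(T/N)) ω - W₂ ((n:ℝ)*(T/N)) ω) :=
        (hW₂.meas _).sub (hW₂.meas _)
      have h1 : Integrable (fun x : ℝ => x ^ 2)
          (P.map (fun ω => W₂ (((n:ℝ)+1)*(T/N)) ω - W₂ ((n:ℝ)*(T/N)) ω)) := by
        rw [hlaw]; exact aux_integrable_sq_gauss hvne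
      have h2 := (integrable_map_measure (measurable_id.pow_const 2).aestronglyMeasurable
        hmg.aemeasurable).mp h1
      exact (memLp_two_iff_integrable_sq hmg.aestronglyMeasurable).mpr
        (by simpa [Function.comp_def] using h2)
    have hX_L2 : ∀ n : ℕ, MemLp (X n) 2 P := fun n => (hA_L2 n).add ((hG_L2 n).const_mul c)
    have hXint : ∀ n, Integrable (X n) P := fun n => (hX_L2 n).integrable (by norm_num)
    have hXsqint : ∀ n, Integrable (fun ω => X n ω ^ 2) P := fun n =>
      (memLp_two_iff_integrable_sq (hX_L2 n).aestronglyMeasurable).mp (hX_L2 n)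
    have hB_L2 : ∀ n : Fin N, MemLp (B n) 2 P := fun n =>
      (hεL2 N n.succ).sub (hεL2 N n.castSucc)
    have hBint : ∀ n, Integrable (B n) P := fun n =>
      (hεL1 N n.succ).sub (hεL1 N n.castSucc)
    have hBsqint : ∀ n : Fin N, Integrable (fun ω => B n ω ^ 2) P := fun n =>
      (memLp_two_iff_integrable_sq (hB_L2 n).aestronglyMeasurable).mp (hB_L2 n)
    have hBmean : ∀ n, ∫ ω, B n ω ∂P = 0 := fun n => by
      simp only [hB]
      rw [integral_sub (hεL1 N n.succ) (hεL1 N n.castSucc), hεmean, hεmean, sub_zero]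
    -- ε_i ε_j cross moment
    have hεindep : ∀ n : Fin N, IndepFun (ε N n.succ) (ε N n.castSucc) P := fun n =>
      (hεiid N).indepFun (by
        intro h
        have h2 := congrArg Fin.val h
        simp [Fin.val_succ, Fin.coe_castSucc] at h2)
    have hεmulint : ∀ n : Fin N,
        Integrable (fun ω => ε N n.succ ω * ε N n.castSucc ω) P := fun n => by
      have h := (hεindep n).integrable_mul (hεL1 N n.succ) (hεL1 N n.castSucc)
      simpa [Pi.mul_def] using h
    have hεmul : ∀ n : Fin N, ∫ ω, ε N n.succ ω * ε N n.castSucc ω ∂P = 0 := fun n => by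
      have h := (hεindep n).integral_mul_eq_mul_integral (hεL1 N n.succ).aestronglyMeasurable (hεL1 N n.castSucc).aestronglyMeasurable
      rw [hεmean, hεmean, mul_zero] at h
      simpa [Pi.mul_apply] using h
    have hBsq : ∀ n : Fin N, ∫ ω, B n ω ^ 2 ∂P = 2 := by
      intro n
      have hre : (fun ω => B n ω ^ 2) = fun ω =>
          ε N n.succ ω ^ 2 + ((-2 : ℝ) * (ε N n.succ ω * ε N n.castSucc ω)
            + ε N n.castSucc ω ^ 2) := by
        funext ω; simp only [hB]; ring
      have i1 : Integrable (fun ω => (-2:ℝ) * (ε N n.succ ω * ε N n.castSucc ω)) P :=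
        (hεmulint n).const_mul (-2 : ℝ)
      have i2 : Integrable (fun ω => (-2:ℝ) * (ε N n.succ ω * ε N n.castSucc ω)
          + ε N n.castSucc ω ^ 2) P := i1.add (hεsqint N n.castSucc)
      rw [hre, integral_add (hεsqint N n.succ) i2, integral_add i1 (hεsqint N n.castSucc),
        integral_const_mul, hεsq, hεsq, hεmul]
      ring
    -- X ⫫ B
    have hBm' : ∀ n : Fin N,
        Measurable[⨆ i, MeasurableSpace.comap (ε N i) inferInstance] (B n) := fun n =>
      (measurable_iff_comap_le.mpr
        (le_iSup (fun i => MeasurableSpace.comap (ε N i) inferInstance) n.succ)).sub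
        (measurable_iff_comap_le.mpr
          (le_iSup (fun i => MeasurableSpace.comap (ε N i) inferInstance) n.castSucc))
    have hXBindep : ∀ n : Fin N, IndepFun (X n.val) (B n) P := fun n => by
      rw [IndepFun_iff_Indep]
      exact aux_indep_mono ((hεW N).symm)
        (measurable_iff_comap_le.mp (hXm n.val)) (measurable_iff_comap_le.mp (hBm' n))
    have hXBint : ∀ n : Fin N, Integrable (fun ω => X n.val ω * B n ω) P := fun n => by
      have h := (hXBindep n).integrable_mul (hXint n.val) (hBint n)
      simpa [Pi.mul_def] using h
    have hXB : ∀ n : Fin N, ∫ ω, X n.val ω * B n ω ∂P = 0 := fun n => by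
      have h := (hXBindep n).integral_mul_eq_mul_integral (hXint n.val).aestronglyMeasurable (hBint n).aestronglyMeasurable
      rw [hBmean n, mul_zero] at h
      simpa [Pi.mul_apply] using h
    -- per-term expectation
    have hterm : ∀ n : Fin N, ∫ ω, (X n.val ω + θ * B n ω) ^ 2 ∂P
        = (∫ ω, X n.val ω ^ 2 ∂P) + 2 * θ ^ 2 := by
      intro n
      have hre : (fun ω => (X n.val ω + θ * B n ω) ^ 2) = fun ω =>
          X n.val ω ^ 2 + ((2 * θ) * (X n.val ω * B n ω) + θ ^ 2 * B n ω ^ 2) := by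
        funext ω; ring
      have i1 : Integrable (fun ω => (2 * θ) * (X n.val ω * B n ω)) P :=
        (hXBint n).const_mul (2 * θ)
      have i1' : Integrable (fun ω => θ ^ 2 * B n ω ^ 2) P :=
        (hBsqint n).const_mul (θ ^ 2)
      have i2 : Integrable (fun ω => (2 * θ) * (X n.val ω * B n ω)
          + θ ^ 2 * B n ω ^ 2) P := i1.add i1'
      rw [hre, integral_add (hXsqint n.val) i2, integral_add i1 i1',
        integral_const_mul, integral_const_mul, hXB n, hBsq n]
      ring
    -- rewrite noisyQVMean
    have hsum_int : ∀ n : Fin N, Integrable (fun ω => (X n.val ω + θ * B n ω) ^ 2) P := fun n =>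
      (memLp_two_iff_integrable_sq
        (((hX_L2 n.val).add ((hB_L2 n).const_mul θ)).aestronglyMeasurable)).mp
        ((hX_L2 n.val).add ((hB_L2 n).const_mul θ))
    have h1 : noisyQVMean P W₁ W₂ κ T θ ε N
        = ∫ ω, (1 / (2 * (N:ℝ) * (T / N))) * ∑ n : Fin N, (X n.val ω + θ * B n ω) ^ 2 ∂P := by
      rw [noisyQVMean]
      apply integral_congr_ae
      filter_upwards [hW₁.cont] with ω hω
      congr 1
      apply Finset.sum_congr rfl
      intro n _
      have e1 : disp κ W₁ W₂ (((n.succ : ℕ):ℝ) * (T/N)) ω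
          = Ig c W₁ (((n.succ : ℕ):ℝ) * (T/N)) ω + c * W₂ (((n.succ : ℕ):ℝ) * (T/N)) ω :=
        Ig_eq_of_continuous κ W₁ W₂ ω hω (mul_nonneg (Nat.cast_nonneg _) hδ.le)
      have e2 : disp κ W₁ W₂ (((n.castSucc : ℕ):ℝ) * (T/N)) ω
          = Ig c W₁ (((n.castSucc : ℕ):ℝ) * (T/N)) ω
            + c * W₂ (((n.castSucc : ℕ):ℝ) * (T/N)) ω :=
        Ig_eq_of_continuous κ W₁ W₂ ω hω (mul_nonneg (Nat.cast_nonneg _) hδ.le)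
      rw [e1, e2]
      simp only [hX, hB, Fin.val_succ, Fin.coe_castSucc]
      push_cast
      ring
    have h2 : ∫ ω, (1 / (2 * (N:ℝ) * (T / N))) * ∑ n : Fin N, (X n.val ω + θ * B n ω) ^ 2 ∂P
        = (1 / (2 * (N:ℝ) * (T / N)))
          * ∑ n : Fin N, ((∫ ω, X n.val ω ^ 2 ∂P) + 2 * θ ^ 2) := by
      rw [integral_const_mul, integral_finset_sum _ (fun n _ => hsum_int n)]
      congr 1
      exact Finset.sum_congr rfl fun n _ => hterm n
    -- rewrite qv expectation
    have h3 : ∫ ω, qv κ W₁ W₂ N (T/N) ω ∂P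
        = (1 / (2 * (N:ℝ) * (T / N))) * ∑ n ∈ Finset.range N, ∫ ω, X n ω ^ 2 ∂P := by
      have h4 : ∫ ω, qv κ W₁ W₂ N (T/N) ω ∂P
          = ∫ ω, (1 / (2 * (N:ℝ) * (T / N))) * ∑ n ∈ Finset.range N, X n ω ^ 2 ∂P := by
        apply integral_congr_ae
        filter_upwards [hW₁.cont] with ω hω
        rw [qv]
        congr 1
        apply Finset.sum_congr rfl
        intro n _
        have e1 : disp κ W₁ W₂ (((n:ℝ) + 1) * (T/N)) ω
            = Ig c W₁ (((n:ℝ) + 1) * (T/N)) ω + c * W₂ (((n:ℝ) + 1) * (T/N)) ω :=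
          Ig_eq_of_continuous κ W₁ W₂ ω hω (htnn1 n)
        have e2 : disp κ W₁ W₂ ((n:ℝ) * (T/N)) ω
            = Ig c W₁ ((n:ℝ) * (T/N)) ω + c * W₂ ((n:ℝ) * (T/N)) ω :=
          Ig_eq_of_continuous κ W₁ W₂ ω hω (htnn n)
        rw [e1, e2]
        simp only [hX]
        ring
      rw [h4, integral_const_mul, integral_finset_sum _ (fun n _ => hXsqint n)]
    -- combine
    rw [h1, h2, h3]
    rw [Finset.sum_add_distrib, Finset.sum_const, Finset.card_univ, Fintype.card_fin]
    have hsum : ∑ n : Fin N, ∫ ω, X n.val ω ^ 2 ∂P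
        = ∑ n ∈ Finset.range N, ∫ ω, X n ω ^ 2 ∂P := by
      exact Fin.sum_univ_eq_sum_range (fun n => ∫ ω, X n ω ^ 2 ∂P) N
    rw [hsum, mul_add]
    congr 1
    have hN0 : (N:ℝ) ≠ 0 := ne_of_gt hNpos
    have hT0 : T ≠ 0 := ne_of_gt hT
    field_simp
    ring
  refine ⟨key, ?_⟩
  -- divergence
  have hlow : ∀ N : ℕ, 1 ≤ N → θ ^ 2 * N / T ≤ noisyQVMean P W₁ W₂ κ T θ ε N := by
    intro N hN
    rw [key N hN]
    have hNpos : (0:ℝ) < N := by exact_mod_cast hN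
    have h0 : 0 ≤ ∫ ω, qv κ W₁ W₂ N (T / N) ω ∂P := by
      apply integral_nonneg
      intro ω
      apply mul_nonneg
      · apply div_nonneg zero_le_one
        exact mul_nonneg (by positivity) (div_nonneg hT.le (Nat.cast_nonneg N))
      · exact Finset.sum_nonneg fun n _ => sq_nonneg _
    linarith
  have hInf : Tendsto (fun N : ℕ => θ ^ 2 * (N:ℝ) / T) atTop atTop := by
    apply Tendsto.atTop_div_const hT
    exact tendsto_natCast_atTop_atTop.const_mul_atTop (by positivity)
  apply tendsto_atTop_mono' atTop _ hInf
  filter_upwards [eventually_ge_atTop 1] with N hN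
  exact hlow N hN
end
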